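/- arXiv:2006.02124 — 3 statements merged into one kernel-verified Lean document; each statement's English description precedes it below -/
import Mathlib

section
/- Let G be a graph, H a graph with root vertex v ∈ V(H), and let f be a γ_I(G∘_v H)-function such that B_f = {x ∈ V(G) : ω(f_x) = γ_I(H) − 1} is nonempty. Then, writing m = γ_I(H), the set A_f = {x ∈ V(G) : ω(f_x) ≥ m} equals A_f^{0,m} ∪ A_f^{1,m} ∪ A_f^{2,m} ∪ A_f^{2,m+1}, where A_f^{i,j} = {x ∈ A_f : f(x) = i and ω(f_x) = j}. -/
open Finset

open scoped Classical

/-- An Italian dominating function on a finite simple graph: values in {0,1,2} and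
every vertex with value 0 has neighbour values summing to at least 2. -/
noncomputable def IsIDF {α : Type*} [Fintype α] (G : SimpleGraph α) (f : α → ℕ) : Prop :=
  (∀ u, f u ≤ 2) ∧
    ∀ u, f u = 0 → 2 ≤ ∑ w ∈ Finset.univ.filter (fun w => G.Adj u w), f w

/-- The Italian domination number γ_I(G). -/
noncomputable def italianNumber {α : Type*} [Fintype α] (G : SimpleGraph α) : ℕ :=
  sInf {n | ∃ f : α → ℕ, IsIDF G f ∧ ∑ u, f u = n}

/-- A γ_I(G)-function: an IDF on G of minimum weight. -/
noncomputable def IsMinIDF {α : Type*} [Fintype α] (G : SimpleGraph α) (f : α → ℕ) : Prop :=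
  IsIDF G f ∧ ∑ u, f u = italianNumber G

/-- D is a dominating set of G. -/
def IsDomSet {α : Type*} (G : SimpleGraph α) (D : Set α) : Prop :=
  ∀ u ∉ D, ∃ w ∈ D, G.Adj u w

/-- The domination number γ(G). -/
noncomputable def dominationNumber {α : Type*} [Fintype α] (G : SimpleGraph α) : ℕ :=
  sInf {n | ∃ D : Finset α, IsDomSet G ↑D ∧ D.card = n}

/-- The degree of a vertex. -/
noncomputable def deg {α : Type*} [Fintype α] (G : SimpleGraph α) (u : α) : ℕ :=
  (Finset.univ.filter (fun w => G.Adj u w)).card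

/-- The rooted product G∘_v H: one copy of H for each vertex of G, the root v of the
x-th copy being identified with the vertex x of G. The pair (x, y) is the vertex y of
the x-th copy of H; in particular (x, v) is the vertex x of G. -/
def rootedProd {α β : Type*} (G : SimpleGraph α) (H : SimpleGraph β) (v : β) :
    SimpleGraph (α × β) where
  Adj p q := (p.1 = q.1 ∧ H.Adj p.2 q.2) ∨ (p.2 = v ∧ q.2 = v ∧ G.Adj p.1 q.1)
  symm := by
    refine ⟨?_⟩
    rintro ⟨x, y⟩ ⟨x', y'⟩ (⟨h1, h2⟩ | ⟨h1, h2, h3⟩)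
    · exact Or.inl ⟨h1.symm, h2.symm⟩
    · exact Or.inr ⟨h2, h1, h3.symm⟩
  loopless := by
    refine ⟨?_⟩
    rintro ⟨x, y⟩ (⟨_, h⟩ | ⟨_, _, h⟩)
    · exact H.loopless.irrefl _ h
    · exact G.loopless.irrefl _ h

/-- The weight ω(f_x) of the restriction of f to the copy H_x. -/
def copyWeight {α β : Type*} [Fintype β] (f : α × β → ℕ) (x : α) : ℕ :=
  ∑ y, f (x, y)

/-- The graph H − {v} obtained from H by deleting the vertex v. -/
def deleteVertex {β : Type*} (H : SimpleGraph β) (v : β) : SimpleGraph {w : β // w ≠ v} :=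
  SimpleGraph.induce {w : β | w ≠ v} H

-- ######## helper lemmas #########

lemma idf_nbr_sum {α β : Type*} [Fintype α] [Fintype β]
    (G : SimpleGraph α) (H : SimpleGraph β) (v : β) (F : α × β → ℕ) (x : α) (u : β)
    (hu : u ≠ v) :
    ∑ q ∈ Finset.univ.filter (fun q => (rootedProd G H v).Adj (x, u) q), F q
      = ∑ w ∈ Finset.univ.filter (fun w => H.Adj u w), F (x, w) := by
  rw [Finset.sum_filter, Finset.sum_filter, Fintype.sum_prod_type]
  rw [Fintype.sum_eq_single x (fun z hz => ?_)]
  · apply Finset.sum_congr rfl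
    intro y _
    simp [rootedProd, hu]
  · apply Finset.sum_eq_zero
    intro y _
    simp only [rootedProd]
    refine if_neg ?_
    rintro (⟨h1, _⟩ | ⟨h1, _, _⟩)
    · exact hz h1.symm
    · exact hu h1

lemma italian_set_nonempty {γ : Type*} [Fintype γ] (G : SimpleGraph γ) :
    {n | ∃ f : γ → ℕ, IsIDF G f ∧ ∑ u, f u = n}.Nonempty :=
  ⟨_, fun _ => 2, ⟨fun _ => le_refl 2, fun u h => by simp at h⟩, rfl⟩

lemma italianNumber_le {γ : Type*} [Fintype γ] {G : SimpleGraph γ} {f : γ → ℕ}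
    (hf : IsIDF G f) : italianNumber G ≤ ∑ u, f u :=
  Nat.sInf_le ⟨f, hf, rfl⟩

lemma one_le_italianNumber {β : Type*} [Fintype β] (H : SimpleGraph β) (v : β) :
    1 ≤ italianNumber H := by
  by_contra h
  push_neg at h
  interval_cases h' : italianNumber H
  rw [italianNumber, Nat.sInf_eq_zero] at h'
  rcases h' with h' | h'
  · obtain ⟨g, hg, hg0⟩ := h'
    rw [Finset.sum_eq_zero_iff] at hg0
    have := hg.2 v (hg0 v (Finset.mem_univ v))
    rw [Finset.sum_eq_zero (fun w hw => hg0 w (Finset.mem_univ w))] at this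
    omega
  · exact (italian_set_nonempty H).ne_empty h'

lemma replace_copy {α β : Type*} [Fintype α] [Fintype β]
    {G : SimpleGraph α} {H : SimpleGraph β} {v : β} {f : α × β → ℕ}
    (hf : IsIDF (rootedProd G H v) f) (x : α) (g : β → ℕ)
    (hg2 : ∀ u, g u ≤ 2) (hgv0 : g v ≠ 0) (hgv : f (x, v) ≤ g v)
    (hgz : ∀ u, g u = 0 → 2 ≤ ∑ w ∈ Finset.univ.filter (fun w => H.Adj u w), g w) :
    ∃ F : α × β → ℕ, IsIDF (rootedProd G H v) F ∧
      ∑ q, F q + copyWeight f x = ∑ q, f q + ∑ y, g y := by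
  refine ⟨fun q => if q.1 = x then g q.2 else f q, ⟨?_, ?_⟩, ?_⟩
  · intro u
    dsimp only
    split
    · exact hg2 _
    · exact hf.1 u
  · rintro ⟨z, u⟩ hzu
    by_cases hz : z = x
    · subst hz
      simp only [if_pos rfl] at hzu
      have hu : u ≠ v := fun h => hgv0 (h ▸ hzu)
      rw [idf_nbr_sum G H v _ z u hu]
      simp only [if_pos rfl]
      exact hgz u hzu
    · simp only [if_neg hz] at hzu
      refine le_trans (hf.2 (z, u) hzu) (Finset.sum_le_sum ?_)
      rintro ⟨z', u'⟩ hq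
      simp only [Finset.mem_filter] at hq
      dsimp only
      split
      · rename_i h1
        subst h1
        rcases hq.2 with ⟨h2, _⟩ | ⟨_, h2, _⟩
        · exact absurd h2 hz
        · dsimp at h2; subst h2; exact hgv
      · exact le_refl _
  · rw [Fintype.sum_prod_type]
    have e1 : ∀ z ∈ Finset.univ.erase x,
        (∑ y, if (z, y).1 = x then g (z, y).2 else f (z, y)) = copyWeight f z := by
      intro z hz
      apply Finset.sum_congr rfl
      intro y _
      rw [if_neg (Finset.mem_erase.mp hz).1]
    have e2 : ∑ q : α × β, f q = copyWeight f x + ∑ z ∈ Finset.univ.erase x, copyWeight f z := by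
      rw [Fintype.sum_prod_type, ← Finset.add_sum_erase _ _ (Finset.mem_univ x)]
      rfl
    have e3 : (∑ y : β, if (x, y).1 = x then g (x, y).2 else f (x, y)) = ∑ y, g y :=
      Finset.sum_congr rfl (fun y _ => if_pos rfl)
    rw [← Finset.add_sum_erase _ _ (Finset.mem_univ x), Finset.sum_congr rfl e1, e2, e3]
    ring


/-- Corollary of Lemma 3: for a γ_I(G∘_v H)-function f with B_f ≠ ∅,
writing m = γ_I(H), A_f = A_f^{0,m} ∪ A_f^{1,m} ∪ A_f^{2,m} ∪ A_f^{2,m+1},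
where A_f^{i,j} = {x ∈ A_f : f(x) = i and ω(f_x) = j}. -/
theorem stmt3 {α β : Type*} [Fintype α] [Nonempty α] [Fintype β]
    (G : SimpleGraph α) (H : SimpleGraph β) (v : β)
    (f : α × β → ℕ) (hf : IsMinIDF (rootedProd G H v) f)
    (hB : ∃ x : α, copyWeight f x = italianNumber H - 1) :
    {x : α | italianNumber H ≤ copyWeight f x} =
      {x : α | (italianNumber H ≤ copyWeight f x) ∧ f (x, v) = 0 ∧
          copyWeight f x = italianNumber H} ∪
      {x : α | (italianNumber H ≤ copyWeight f x) ∧ f (x, v) = 1 ∧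
          copyWeight f x = italianNumber H} ∪
      {x : α | (italianNumber H ≤ copyWeight f x) ∧ f (x, v) = 2 ∧
          copyWeight f x = italianNumber H} ∪
      {x : α | (italianNumber H ≤ copyWeight f x) ∧ f (x, v) = 2 ∧
          copyWeight f x = italianNumber H + 1} := by
  obtain ⟨b, hb⟩ := hB
  set m := italianNumber H with hm
  have hm1 : 1 ≤ m := one_le_italianNumber H v
  -- inner domination within a copy
  have hinner : ∀ (x : α) (u : β), u ≠ v → f (x, u) = 0 →
      2 ≤ ∑ w ∈ Finset.univ.filter (fun w => H.Adj u w), f (x, w) := by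
    intro x u hu h0
    rw [← idf_nbr_sum G H v f x u hu]
    exact hf.1.2 (x, u) h0
  -- the root of copy b has value 0
  have hbv : f (b, v) = 0 := by
    by_contra h
    have hidf : IsIDF H (fun y => f (b, y)) := by
      refine ⟨fun u => hf.1.1 (b, u), fun u h0 => ?_⟩
      have hu : u ≠ v := fun huv => h (huv ▸ h0)
      exact hinner b u hu h0
    have := italianNumber_le hidf
    have hwb : ∑ y, f (b, y) = m - 1 := hb
    omega
  -- the key bound via copy replacement
  have bound : ∀ (c : ℕ) (x : α), 1 ≤ c → c ≤ 2 → f (x, v) ≤ c →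
      copyWeight f x ≤ c + (m - 1) := by
    intro c x hc1 hc2 hxc
    set g : β → ℕ := fun y => if y = v then c else f (b, y) with hg
    have hgsum : ∑ y, g y = c + (m - 1) := by
      rw [← Finset.add_sum_erase _ _ (Finset.mem_univ v)]
      have : ∑ y ∈ Finset.univ.erase v, g y = ∑ y ∈ Finset.univ.erase v, f (b, y) := by
        apply Finset.sum_congr rfl
        intro y hy
        rw [hg]; dsimp only; rw [if_neg (Finset.mem_erase.mp hy).1]
      rw [hg]; dsimp only; rw [if_pos rfl, this]
      have : copyWeight f b = f (b, v) + ∑ y ∈ Finset.univ.erase v, f (b, y) := by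
        rw [copyWeight, ← Finset.add_sum_erase _ _ (Finset.mem_univ v)]
      omega
    obtain ⟨F, hF, hFw⟩ := replace_copy hf.1 x g
      (by
        intro u
        rw [hg]; dsimp only
        by_cases h : u = v
        · rw [if_pos h]; exact hc2
        · rw [if_neg h]; exact hf.1.1 (b, u))
      (by rw [hg]; dsimp only; rw [if_pos rfl]; omega)
      (by rw [hg]; dsimp only; rw [if_pos rfl]; exact hxc)
      (by
        intro u h0
        rw [hg] at h0; dsimp only at h0
        have hu : u ≠ v := by intro huv; rw [if_pos huv] at h0; omega
        rw [if_neg hu] at h0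
        refine le_trans (hinner b u hu h0) (Finset.sum_le_sum ?_)
        intro w _
        rw [hg]; dsimp only
        split
        · rename_i hw; rw [hw, hbv]; omega
        · exact le_refl _)
    have h1 : italianNumber (rootedProd G H v) ≤ ∑ q, F q := italianNumber_le hF
    have h2 : ∑ q, f q = italianNumber (rootedProd G H v) := hf.2
    omega
  ext x
  simp only [Set.mem_setOf_eq, Set.mem_union]
  constructor
  · intro hx
    have hb2 : copyWeight f x ≤ 2 + (m - 1) := bound 2 x one_le_two le_rfl (hf.1.1 (x, v))
    have hfx2 : f (x, v) ≤ 2 := hf.1.1 (x, v)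
    by_cases hc : f (x, v) ≤ 1
    · have := bound 1 x le_rfl one_le_two hc
      omega
    · omega
  · rintro (((⟨h, _⟩ | ⟨h, _⟩) | ⟨h, _⟩) | ⟨h, _⟩) <;> exact h
end

section
/- For any graph G, γ_I(G) = n(G) if and only if the maximum degree of G is at most 1. -/
open Finset

open scoped Classical

/-- Remark: γ_I(G) = n(G) iff the maximum degree of G is at most 1. -/
theorem stmt12 {α : Type*} [Fintype α] (G : SimpleGraph α) :
    italianNumber G = Fintype.card α ↔ ∀ u : α, deg G u ≤ 1 := by
  classical
  have hmem : (Fintype.card α) ∈ {n | ∃ f : α → ℕ, IsIDF G f ∧ ∑ u, f u = n} := by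
    refine ⟨fun _ => 1, ⟨fun u => by norm_num, fun u h => by simp at h⟩, by simp⟩
  constructor
  · intro h u
    by_contra hu
    push_neg at hu
    have hu' : 1 < (Finset.univ.filter (fun w => G.Adj u w)).card := hu
    obtain ⟨w1, hw1, w2, hw2, hne⟩ := Finset.one_lt_card.mp hu'
    simp only [Finset.mem_filter, Finset.mem_univ, true_and] at hw1 hw2
    set f : α → ℕ := fun x => if x = u then 0 else 1 with hf
    have hidf : IsIDF G f := by
      constructor
      · intro x; simp only [hf]; split <;> norm_num
      · intro x hx
        have hxu : x = u := by
          by_contra hc; simp [hf, hc] at hx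
        subst hxu
        have hsub : {w1, w2} ⊆ Finset.univ.filter (fun w => G.Adj x w) := by
          intro z hz
          simp only [Finset.mem_insert, Finset.mem_singleton] at hz
          rcases hz with rfl | rfl <;> simp [hw1, hw2]
        calc (2 : ℕ) = ∑ w ∈ ({w1, w2} : Finset α), f w := by
              rw [Finset.sum_pair hne]
              have hne1 : w1 ≠ x := fun h => G.loopless.irrefl x (h ▸ hw1)
              have hne2 : w2 ≠ x := fun h => G.loopless.irrefl x (h ▸ hw2)
              have h1 : f w1 = 1 := by simp [hf, hne1]
              have h2 : f w2 = 1 := by simp [hf, hne2]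
              omega
          _ ≤ _ := Finset.sum_le_sum_of_subset hsub
    have hweight : ∑ x, f x = Fintype.card α - 1 := by
      have : ∑ x, f x = ∑ x ∈ Finset.univ \ {u}, f x := by
        refine (Finset.sum_subset (Finset.sdiff_subset) ?_).symm
        intro x _ hx
        simp only [Finset.mem_sdiff, Finset.mem_univ, true_and, Finset.mem_singleton,
          not_not] at hx
        simp [hf, hx]
      rw [this]
      have : ∑ x ∈ Finset.univ \ {u}, f x = ∑ x ∈ Finset.univ \ {u}, 1 := by
        apply Finset.sum_congr rfl
        intro x hx
        simp only [Finset.mem_sdiff, Finset.mem_singleton] at hx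
        simp [hf, hx.2]
      rw [this, Finset.sum_const, smul_eq_mul, mul_one, Finset.card_sdiff_of_subset (by simp)]
      simp
    have hle : italianNumber G ≤ Fintype.card α - 1 := Nat.sInf_le ⟨f, hidf, hweight⟩
    have hpos : 0 < Fintype.card α := Fintype.card_pos_iff.mpr ⟨u⟩
    omega
  · intro hΔ
    have hle : italianNumber G ≤ Fintype.card α := Nat.sInf_le hmem
    obtain ⟨f, hidf, hsum⟩ := Nat.sInf_mem (Set.nonempty_of_mem hmem)
    have hsum' : ∑ u, f u = italianNumber G := hsum
    have hge : Fintype.card α ≤ italianNumber G := by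
      rw [← hsum']
      have key : ∀ u, f u = 0 → ∃ w, G.Adj u w ∧ f w = 2 := by
        intro u hu
        have h2 := hidf.2 u hu
        have hc : (Finset.univ.filter (fun w => G.Adj u w)).card ≤ 1 := hΔ u
        have hne : (Finset.univ.filter (fun w => G.Adj u w)).Nonempty := by
          by_contra hempty
          rw [Finset.not_nonempty_iff_eq_empty] at hempty
          rw [hempty] at h2; simp at h2
        obtain ⟨w, hw⟩ := hne
        have hw' : Finset.univ.filter (fun w => G.Adj u w) = {w} :=
          Finset.eq_singleton_iff_unique_mem.mpr
            ⟨hw, fun x hx => Finset.card_le_one.mp hc x hx w hw⟩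
        have hadj : G.Adj u w := by simpa using hw
        rw [hw', Finset.sum_singleton] at h2
        exact ⟨w, hadj, le_antisymm (hidf.1 w) h2⟩
      set Z := Finset.univ.filter (fun u => f u = 0) with hZ
      set g : α → α := fun u => if h : f u = 0 then (key u h).choose else u with hg
      have hgspec : ∀ u ∈ Z, G.Adj u (g u) ∧ f (g u) = 2 := by
        intro u hu
        simp only [hZ, Finset.mem_filter] at hu
        simp only [hg, dif_pos hu.2]
        exact (key u hu.2).choose_spec
      have hinj : Set.InjOn g ↑Z := by
        intro a ha b hb hab
        have h1 := hgspec a ha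
        have h2 := hgspec b hb
        have haw : a ∈ Finset.univ.filter (fun x => G.Adj (g a) x) := by
          simp [h1.1.symm]
        have hbw : b ∈ Finset.univ.filter (fun x => G.Adj (g a) x) := by
          simp [hab ▸ h2.1.symm]
        exact Finset.card_le_one.mp (hΔ (g a)) a haw b hbw
      set T := Z.image g with hT
      have hTcard : T.card = Z.card := Finset.card_image_of_injOn hinj
      have hTsub : T ⊆ Finset.univ \ Z := by
        intro x hx
        simp only [hT, Finset.mem_image] at hx
        obtain ⟨u, hu, rfl⟩ := hx
        have := (hgspec u hu).2
        simp only [Finset.mem_sdiff, Finset.mem_univ, true_and, hZ, Finset.mem_filter]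
        simp [this]
      have hZ0 : ∑ u ∈ Z, f u = 0 := by
        apply Finset.sum_eq_zero
        intro u hu
        simp only [hZ, Finset.mem_filter] at hu
        exact hu.2
      have hsplit : ∑ u, f u = ∑ u ∈ Finset.univ \ Z, f u := by
        calc ∑ u, f u = ∑ u ∈ Finset.univ \ Z, f u + ∑ u ∈ Z, f u :=
              (Finset.sum_sdiff (Finset.subset_univ Z)).symm
          _ = ∑ u ∈ Finset.univ \ Z, f u := by rw [hZ0, add_zero]
      have hsplit2 : ∑ u ∈ Finset.univ \ Z, f u
          = ∑ u ∈ T, f u + ∑ u ∈ (Finset.univ \ Z) \ T, f u := by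
        rw [add_comm]
        exact (Finset.sum_sdiff hTsub).symm
      have hTsum : ∑ u ∈ T, f u = 2 * T.card := by
        rw [Finset.sum_congr rfl (fun x hx => ?_), Finset.sum_const, smul_eq_mul,
          mul_comm]
        simp only [hT, Finset.mem_image] at hx
        obtain ⟨u, hu, rfl⟩ := hx
        exact (hgspec u hu).2
      have hrest : ((Finset.univ \ Z) \ T).card ≤ ∑ u ∈ (Finset.univ \ Z) \ T, f u := by
        calc ((Finset.univ \ Z) \ T).card = ∑ u ∈ (Finset.univ \ Z) \ T, 1 := by
              simp
          _ ≤ _ := by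
              apply Finset.sum_le_sum
              intro x hx
              simp only [Finset.mem_sdiff, Finset.mem_univ, true_and, hZ,
                Finset.mem_filter] at hx
              exact Nat.one_le_iff_ne_zero.mpr hx.1
      have hcards : ((Finset.univ \ Z) \ T).card = (Finset.univ \ Z).card - T.card :=
        Finset.card_sdiff_of_subset hTsub
      have hZcard : (Finset.univ \ Z).card = Fintype.card α - Z.card := by
        rw [Finset.card_sdiff_of_subset (Finset.subset_univ Z)]; simp
      have hZle : Z.card ≤ Fintype.card α := Finset.card_le_univ Z
      have hTle : T.card ≤ (Finset.univ \ Z).card := Finset.card_le_card hTsub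
      clear_value Z g T
      clear hsum hsum' hmem hle hidf key hgspec hinj hΔ hZ hg hT hZ0
      omega
    exact le_antisymm hle hge
end

section
/- For any graph G, any integer t ≥ 3 and any vertex v of the cycle graph C_t, γ_I(G∘_v C_t) = n(G)·⌈t/2⌉. -/
open Finset

open scoped Classical

open Fin.CommRing in
lemma cycAdj_iff {n : ℕ} (y w : Fin (n+3)) :
    (SimpleGraph.cycleGraph (n+3)).Adj y w ↔ w = y - 1 ∨ w = y + 1 := by
  rw [SimpleGraph.cycleGraph_adj]
  constructor
  · rintro (h | h)
    · left; rw [← h]; ring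
    · right; rw [← h]; ring
  · rintro (rfl | rfl)
    · left; ring
    · right; ring

lemma two_ne {n : ℕ} : (2 : Fin (n+3)) ≠ 0 := by
  intro h
  have h2 : ((2 : Fin (n+3)) : ℕ) = 2 % (n+3) := rfl
  rw [h] at h2
  rw [Nat.mod_eq_of_lt (by omega)] at h2
  simp at h2

open Fin.CommRing in
lemma sub_ne_add {n : ℕ} (y : Fin (n+3)) : y - 1 ≠ y + 1 := by
  intro h
  apply two_ne (n := n)
  calc (2 : Fin (n+3)) = (y+1) - y + 1 := by ring
    _ = (y-1) - y + 1 := by rw [h]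
    _ = 0 := by ring

open Fin.CommRing in
lemma add_one_ne {n : ℕ} (v : Fin (n+3)) : v + 1 ≠ v := by
  intro h
  have h1 : (1 : Fin (n+3)) = 0 := by
    calc (1 : Fin (n+3)) = v + 1 - v := by ring
      _ = v - v := by rw [h]
      _ = 0 := by ring
  have h2 : ((1 : Fin (n+3)) : ℕ) = 1 := rfl
  rw [h1] at h2
  simp at h2

open Fin.CommRing in
lemma cycle_lb {n : ℕ} (v : Fin (n+3)) (f : Fin (n+3) → ℕ)
    (hle : ∀ u, f u ≤ 2)
    (hdom : ∀ u, u ≠ v → f u = 0 → 2 ≤ f (u - 1) + f (u + 1)) :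
    n + 3 ≤ 2 * ∑ u, f u := by
  set S := ∑ u, f u with hS
  have hsum1 : ∑ u, f (u + 1) = S := Fintype.sum_equiv (Equiv.addRight 1) _ _ (fun u => rfl)
  have hsum2 : ∑ u, f (u - 1) = S := Fintype.sum_equiv (Equiv.subRight 1) _ _ (fun u => rfl)
  have hclosed : ∑ u, (f u + (f (u - 1) + f (u + 1))) = 3 * S := by
    rw [Finset.sum_add_distrib, Finset.sum_add_distrib, hsum1, hsum2]; ring
  have key : ∀ u : Fin (n+3), f u + (if f u = 0 ∧ u ≠ v then 2 else 0) ≤ f u + (f (u-1) + f (u+1)) := by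
    intro u
    by_cases h : f u = 0 ∧ u ≠ v
    · rw [if_pos h]; have := hdom u h.2 h.1; omega
    · rw [if_neg h]; omega
  set Z' := (univ.filter (fun u => f u = 0 ∧ u ≠ v)).card with hZ'
  have hboundsum : ∑ u, (f u + (if f u = 0 ∧ u ≠ v then 2 else 0)) = S + 2 * Z' := by
    rw [Finset.sum_add_distrib, ← hS]
    congr 1
    rw [← Finset.sum_filter, Finset.sum_const, smul_eq_mul, mul_comm]
  have hZ'S : Z' ≤ S := by
    have h1 : ∑ u, (f u + (if f u = 0 ∧ u ≠ v then 2 else 0)) ≤ ∑ u, (f u + (f (u-1) + f (u+1))) :=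
      Finset.sum_le_sum (fun u _ => key u)
    rw [hboundsum, hclosed] at h1
    omega
  set Z := (univ.filter (fun u => f u = 0)).card with hZdef
  set N := (univ.filter (fun u => ¬ f u = 0)).card with hNdef
  have hZN : Z + N = n + 3 := by
    rw [hZdef, hNdef, Finset.card_filter_add_card_filter_not, Finset.card_univ, Fintype.card_fin]
  have hNS : N ≤ S := by
    calc N = ∑ _u ∈ univ.filter (fun u => ¬ f u = 0), 1 := by rw [hNdef, Finset.card_eq_sum_ones]
      _ ≤ ∑ u ∈ univ.filter (fun u => ¬ f u = 0), f u :=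
          Finset.sum_le_sum (fun u hu => by simp only [Finset.mem_filter] at hu; omega)
      _ ≤ S := Finset.sum_le_sum_of_subset (Finset.filter_subset _ _)
  by_cases hv : f v = 0
  · by_contra hcon
    have hlt : 2 * S ≤ n + 2 := by omega
    have hZZ' : Z ≤ Z' + 1 := by
      have hsub : univ.filter (fun u => f u = 0) ⊆ insert v (univ.filter (fun u => f u = 0 ∧ u ≠ v)) := by
        intro u hu
        simp only [Finset.mem_filter, Finset.mem_univ, true_and, Finset.mem_insert] at hu ⊢
        by_cases h : u = v
        · exact Or.inl h
        · exact Or.inr ⟨hu, h⟩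
      calc Z ≤ (insert v (univ.filter (fun u => f u = 0 ∧ u ≠ v))).card := Finset.card_le_card hsub
        _ ≤ Z' + 1 := Finset.card_insert_le _ _
    -- tight: Z = S + 1, N = S, Z' = S, 2S = n+2
    have hNSe : N = S := by omega
    have hZ'e : Z' = S := by omega
    have hone : ∀ u, f u ≤ 1 := by
      by_contra hc
      push_neg at hc
      obtain ⟨w, hw⟩ := hc
      have hlt2 : N < ∑ u ∈ univ.filter (fun u => ¬ f u = 0), f u := by
        rw [hNdef, Finset.card_eq_sum_ones]
        apply Finset.sum_lt_sum (fun u hu => by simp only [Finset.mem_filter] at hu; omega)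
        refine ⟨w, ?_, by omega⟩
        simp only [Finset.mem_filter, Finset.mem_univ, true_and]
        omega
      have : ∑ u ∈ univ.filter (fun u => ¬ f u = 0), f u ≤ S :=
        Finset.sum_le_sum_of_subset (Finset.filter_subset _ _)
      omega
    -- equality forces the closed neighbourhood of v to be 0
    have hsplit := Finset.add_sum_erase univ (fun u => f u + (f (u - 1) + f (u + 1))) (Finset.mem_univ v)
    have hsplit2 := Finset.add_sum_erase univ (fun u => f u + (if f u = 0 ∧ u ≠ v then 2 else 0)) (Finset.mem_univ v)
    have hboundv : f v + (if f v = 0 ∧ v ≠ v then 2 else 0) = 0 := by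
      rw [if_neg (by simp)]; omega
    have herase_bound : ∑ u ∈ univ.erase v, (f u + (if f u = 0 ∧ u ≠ v then 2 else 0)) = 3 * S := by
      rw [hboundv, zero_add] at hsplit2
      rw [hsplit2, hboundsum]
      omega
    have herase_le : ∑ u ∈ univ.erase v, (f u + (if f u = 0 ∧ u ≠ v then 2 else 0))
        ≤ ∑ u ∈ univ.erase v, (f u + (f (u - 1) + f (u + 1))) :=
      Finset.sum_le_sum (fun u _ => key u)
    rw [hclosed] at hsplit
    have hnv : f (v - 1) + f (v + 1) = 0 := by omega
    have hv1 : f (v + 1) = 0 := by omega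
    have hd := hdom (v + 1) (add_one_ne v) hv1
    have e1 : v + 1 - 1 = v := by ring
    rw [e1] at hd
    have := hone (v + 1 + 1)
    omega
  · have hsub : univ.filter (fun u => f u = 0) ⊆ univ.filter (fun u => f u = 0 ∧ u ≠ v) := by
      intro u hu
      simp only [Finset.mem_filter, Finset.mem_univ, true_and] at hu ⊢
      exact ⟨hu, fun h => hv (h ▸ hu)⟩
    have hZle : Z ≤ Z' := Finset.card_le_card hsub
    omega

lemma evens_range : ∀ m : ℕ, (∑ i ∈ Finset.range m, (if i % 2 = 0 then 1 else 0)) = (m+1)/2 := by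
  intro m
  induction m with
  | zero => simp
  | succ k ih =>
    rw [Finset.sum_range_succ, ih]
    by_cases h : k % 2 = 0 <;> simp [h] <;> omega


lemma rootedProd_adj {α β : Type*} (G : SimpleGraph α) (H : SimpleGraph β) (v : β)
    (p q : α × β) :
    (rootedProd G H v).Adj p q ↔
      (p.1 = q.1 ∧ H.Adj p.2 q.2) ∨ (p.2 = v ∧ q.2 = v ∧ G.Adj p.1 q.1) := Iff.rfl

/-- Corollary: for any graph G, t ≥ 3 and any vertex v of the cycle C_t,
γ_I(G∘_v C_t) = n(G)·⌈t/2⌉. -/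
theorem stmt14 {α : Type*} [Fintype α] [Nonempty α] (G : SimpleGraph α)
    (t : ℕ) (ht : 3 ≤ t) (v : Fin t) :
    italianNumber (rootedProd G (SimpleGraph.cycleGraph t) v) =
      Fintype.card α * ((t + 1) / 2) := by
  
  obtain ⟨n, rfl⟩ : ∃ n, t = n + 3 := ⟨t - 3, by omega⟩
  set GP := rootedProd G (SimpleGraph.cycleGraph (n+3)) v with hGP
  set g : α × Fin (n+3) → ℕ := fun p => if (p.2 : ℕ) % 2 = 0 then 1 else 0 with hg
  have hgval : ∀ p : α × Fin (n+3), g p = if (p.2 : ℕ) % 2 = 0 then 1 else 0 := fun _ => rfl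
  have hpairne : ∀ (x : α) (y : Fin (n+3)),
      ((x, y - 1) : α × Fin (n+3)) ≠ (x, y + 1) := by
    intro x y hc
    exact sub_ne_add y (congrArg Prod.snd hc)
  have hadjm : ∀ (x : α) (y : Fin (n+3)),
      ((x, y - 1) : α × Fin (n+3)) ∈ univ.filter (fun w => GP.Adj (x, y) w) ∧
      ((x, y + 1) : α × Fin (n+3)) ∈ univ.filter (fun w => GP.Adj (x, y) w) := by
    intro x y
    refine ⟨Finset.mem_filter.2 ⟨Finset.mem_univ _, ?_⟩,
      Finset.mem_filter.2 ⟨Finset.mem_univ _, ?_⟩⟩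
    · exact (rootedProd_adj G _ v _ _).mpr (Or.inl ⟨rfl, (cycAdj_iff y _).2 (Or.inl rfl)⟩)
    · exact (rootedProd_adj G _ v _ _).mpr (Or.inl ⟨rfl, (cycAdj_iff y _).2 (Or.inr rfl)⟩)
  have hgIDF : IsIDF GP g := by
    constructor
    · intro u; rw [hgval]; split <;> omega
    · rintro ⟨x, y⟩ h0
      rw [hgval] at h0
      have hy : (y : ℕ) % 2 = 1 := by
        by_cases h : (y : ℕ) % 2 = 0
        · rw [if_pos h] at h0; omega
        · omega
      have hm1 : ((y - 1 : Fin (n+3)) : ℕ) % 2 = 0 := by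
        rw [Fin.coe_sub_one]
        split
        · next h => subst h; simp at hy
        · omega
      have hp1 : ((y + 1 : Fin (n+3)) : ℕ) % 2 = 0 := by
        rw [Fin.val_add_one]
        split
        · simp
        · omega
      have hsub : ({((x, y-1) : α × Fin (n+3)), (x, y+1)} : Finset (α × Fin (n+3)))
          ⊆ univ.filter (fun w => GP.Adj (x, y) w) := by
        intro q hq
        rcases Finset.mem_insert.1 hq with rfl | hq
        · exact (hadjm x y).1
        · rw [Finset.mem_singleton] at hq; subst hq; exact (hadjm x y).2
      calc (2 : ℕ) = ∑ w ∈ ({((x, y-1) : α × Fin (n+3)), (x, y+1)} : Finset (α × Fin (n+3))), g w := by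
            rw [Finset.sum_pair (hpairne x y), hgval, hgval]
            simp only [hm1, hp1, if_pos]
        _ ≤ ∑ w ∈ univ.filter (fun w => GP.Adj (x, y) w), g w :=
            Finset.sum_le_sum_of_subset hsub
  have hcopy : ∀ x : α, ∑ y : Fin (n+3), g (x, y) = (n + 3 + 1) / 2 := by
    intro x
    have : ∑ y : Fin (n+3), g (x, y)
        = ∑ i ∈ Finset.range (n+3), (if i % 2 = 0 then 1 else 0) :=
      Fin.sum_univ_eq_sum_range (fun i => if i % 2 = 0 then 1 else 0) (n+3)
    rw [this, evens_range]
  have hwt : ∑ p, g p = Fintype.card α * ((n + 3 + 1) / 2) := by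
    rw [Fintype.sum_prod_type]
    calc ∑ x : α, ∑ y : Fin (n+3), g (x, y) = ∑ _x : α, (n + 3 + 1) / 2 :=
          Finset.sum_congr rfl (fun x _ => hcopy x)
      _ = Fintype.card α * ((n + 3 + 1) / 2) := by
          rw [Finset.sum_const, Finset.card_univ, smul_eq_mul]
  have hmem : Fintype.card α * ((n + 3 + 1) / 2)
      ∈ {m | ∃ f : α × Fin (n+3) → ℕ, IsIDF GP f ∧ ∑ u, f u = m} := ⟨g, hgIDF, hwt⟩
  rw [italianNumber]
  apply le_antisymm
  · exact Nat.sInf_le hmem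
  · apply le_csInf ⟨_, hmem⟩
    rintro m ⟨f, ⟨hfle, hfdom⟩, rfl⟩
    rw [Fintype.sum_prod_type]
    have percopy : ∀ x : α, (n + 3 + 1) / 2 ≤ ∑ y : Fin (n+3), f (x, y) := by
      intro x
      have hdomx : ∀ y : Fin (n+3), y ≠ v → f (x, y) = 0 →
          2 ≤ f (x, y - 1) + f (x, y + 1) := by
        intro y hy h0
        have h := hfdom (x, y) h0
        have hfe : univ.filter (fun w => GP.Adj (x, y) w)
            = ({((x, y-1) : α × Fin (n+3)), (x, y+1)} : Finset (α × Fin (n+3))) := by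
          ext ⟨a, b⟩
          simp only [Finset.mem_filter, Finset.mem_univ, true_and, Finset.mem_insert,
            Finset.mem_singleton, Prod.mk.injEq]
          rw [hGP, rootedProd_adj]
          constructor
          · rintro (⟨rfl, hadj⟩ | ⟨hyv, -, -⟩)
            · rcases (cycAdj_iff y b).1 hadj with rfl | rfl
              · exact Or.inl ⟨rfl, rfl⟩
              · exact Or.inr ⟨rfl, rfl⟩
            · exact absurd hyv hy
          · rintro (⟨rfl, rfl⟩ | ⟨rfl, rfl⟩)
            · exact Or.inl ⟨rfl, (cycAdj_iff y _).2 (Or.inl rfl)⟩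
            · exact Or.inl ⟨rfl, (cycAdj_iff y _).2 (Or.inr rfl)⟩
        rw [hfe, Finset.sum_pair (hpairne x y)] at h
        exact h
      have h2 : n + 3 ≤ 2 * ∑ y : Fin (n+3), f (x, y) :=
        cycle_lb v (fun y => f (x, y)) (fun y => hfle (x, y)) hdomx
      omega
    calc Fintype.card α * ((n + 3 + 1) / 2) = ∑ _x : α, (n + 3 + 1) / 2 := by
          rw [Finset.sum_const, Finset.card_univ, smul_eq_mul]
      _ ≤ ∑ x : α, ∑ y : Fin (n+3), f (x, y) := Finset.sum_le_sum (fun x _ => percopy x)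
end
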